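/- arXiv:2107.05711 — 6 statements merged into one kernel-verified Lean document; each statement's English description precedes it below -/
import Mathlib

section
/- Let B > 0. The family W = {(W_i, v_i)}_{i∈I} is a (C,C')-controlled fusion frame for H with some lower bound A > 0 and upper bound B if and only if: (a) for every f ∈ H the sequence T_W f := (v_i (C*π_{W_i}C')^{1/2} f)_{i∈I} lies in ℓ²(I,H) and T_W : H → ℓ²(I,H) is a bounded linear operator with ‖T_W‖ ≤ √B — so that its Hilbert-space adjoint T_W* : ℓ²(I,H) → H, given by T_W*((g_i)_{i∈I}) = Σ_{i∈I} v_i (C*π_{W_i}C')^{1/2} g_i and satisfying T_W*(T_W f) = Σ_{i∈I} v_i² C*π_{W_i}C' f, is bounded with ‖T_W*‖ ≤ √B — and (b) T_W* is surjective onto H. -/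
open ContinuousLinearMap

/-- The controlled operator `C* ∘ π_W ∘ C'`. -/
noncomputable def ctrlOp {H : Type*} [NormedAddCommGroup H] [InnerProductSpace ℂ H]
    [CompleteSpace H] (C C' : H →L[ℂ] H) (W : Submodule ℂ H) [CompleteSpace W] :
    H →L[ℂ] H :=
  ContinuousLinearMap.adjoint C ∘L ((W.subtypeL ∘L W.orthogonalProjection) ∘L C')

lemma rpow_two_eq' (x : ℝ) : x ^ ((2 : ENNReal).toReal) = x ^ 2 := by
  rw [ENNReal.toReal_ofNat, ← Real.rpow_natCast x 2]
  norm_num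

lemma lp_norm_sq' {H : Type*} [NormedAddCommGroup H] {ι : Type*}
    (g : lp (fun _ : ι => H) 2) : ‖g‖ ^ 2 = ∑' i, ‖(g : ∀ _ : ι, H) i‖ ^ 2 := by
  have h := lp.norm_rpow_eq_tsum (p := 2) (by norm_num) g
  rw [rpow_two_eq'] at h
  rw [h]
  exact tsum_congr fun i => rpow_two_eq' _

lemma lp_summable' {H : Type*} [NormedAddCommGroup H] {ι : Type*}
    (g : lp (fun _ : ι => H) 2) : Summable (fun i => ‖(g : ∀ _ : ι, H) i‖ ^ 2) := by
  have h := (memℓp_gen_iff (p := 2) (by norm_num)).1 (lp.memℓp g)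
  exact h.congr fun i => rpow_two_eq' _

/-- `{(W i, v i)}` is a `(C,C')`-controlled fusion frame with some lower bound
`A > 0` and upper bound `B` iff the controlled analysis operator
`T f = (v i • (C* π_{W i} C')^{1/2} f)_i` is a well-defined bounded operator `H → ℓ²(ι, H)` with
`‖T‖ ≤ √B` whose adjoint (the controlled synthesis operator) is surjective. -/
theorem stmt_2 {H : Type*} [NormedAddCommGroup H] [InnerProductSpace ℂ H] [CompleteSpace H]
    {ι : Type*} [Countable ι]
    (C C' : H →L[ℂ] H) (hC : IsUnit C) (hC' : IsUnit C')
    (W : ι → Submodule ℂ H) [∀ i, CompleteSpace (W i)]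
    (v : ι → ℝ) (hv : ∀ i, 0 < v i)
    (sq : ι → H →L[ℂ] H)
    (hGpos : ∀ i, (ctrlOp C C' (W i)).IsPositive)
    (hsq_pos : ∀ i, (sq i).IsPositive)
    (hsq_sq : ∀ i, sq i ∘L sq i = ctrlOp C C' (W i))
    (B : ℝ) (hB : 0 < B) :
    (∃ A : ℝ, 0 < A ∧ A ≤ B ∧ ∀ f : H,
        Summable (fun i => v i ^ 2 * ‖sq i f‖ ^ 2) ∧
        A * ‖f‖ ^ 2 ≤ ∑' i, v i ^ 2 * ‖sq i f‖ ^ 2 ∧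
        (∑' i, v i ^ 2 * ‖sq i f‖ ^ 2) ≤ B * ‖f‖ ^ 2) ↔
    (∃ T : H →L[ℂ] lp (fun _ : ι => H) 2,
        (∀ (f : H) (i : ι), (T f : ∀ _ : ι, H) i = v i • sq i f) ∧
        ‖T‖ ≤ Real.sqrt B ∧
        Function.Surjective (ContinuousLinearMap.adjoint T)) := by
  have hterm : ∀ (i : ι) (x : H), ‖v i • x‖ ^ 2 = v i ^ 2 * ‖x‖ ^ 2 := by
    intro i x
    rw [norm_smul, mul_pow, Real.norm_eq_abs, sq_abs]
  constructor
  · rintro ⟨A, hA0, hAB, hfr⟩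
    have hmem : ∀ f : H, Memℓp (fun i => v i • sq i f) 2 := by
      intro f
      apply memℓp_gen
      exact ((hfr f).1).congr fun i => by rw [rpow_two_eq', hterm]
    let T0 : H →ₗ[ℂ] lp (fun _ : ι => H) 2 :=
      { toFun := fun f => ⟨fun i => v i • sq i f, hmem f⟩
        map_add' := by
          intro f g
          apply Subtype.ext
          funext i
          show v i • (sq i) (f + g) = v i • (sq i) f + v i • (sq i) g
          rw [map_add, smul_add]
        map_smul' := by
          intro c f
          apply Subtype.ext
          funext i
          show v i • (sq i) (c • f) = c • (v i • (sq i) f)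
          rw [map_smul, smul_comm] }
    have hTsq0 : ∀ f : H, ‖T0 f‖ ^ 2 = ∑' i, v i ^ 2 * ‖sq i f‖ ^ 2 := by
      intro f
      rw [lp_norm_sq']
      exact tsum_congr fun i => hterm i (sq i f)
    have hTbound : ∀ f : H, ‖T0 f‖ ≤ Real.sqrt B * ‖f‖ := by
      intro f
      have h2 : ‖T0 f‖ ^ 2 ≤ (Real.sqrt B * ‖f‖) ^ 2 := by
        rw [hTsq0, mul_pow, Real.sq_sqrt hB.le]
        exact (hfr f).2.2
      have h3 := Real.sqrt_le_sqrt h2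
      rwa [Real.sqrt_sq (norm_nonneg _), Real.sqrt_sq (by positivity)] at h3
    let T : H →L[ℂ] lp (fun _ : ι => H) 2 := T0.mkContinuous (Real.sqrt B) hTbound
    have hTf : ∀ (f : H) (i : ι), (T f : ∀ _ : ι, H) i = v i • sq i f := fun f i => rfl
    have hTsq : ∀ f : H, ‖T f‖ ^ 2 = ∑' i, v i ^ 2 * ‖sq i f‖ ^ 2 := hTsq0
    refine ⟨T, hTf, T0.mkContinuous_norm_le (Real.sqrt_nonneg B) hTbound, ?_⟩
    set S : H →L[ℂ] H := ContinuousLinearMap.adjoint T ∘L T with hSdef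
    have hcoer : ∀ f : H, A * ‖f‖ ^ 2 ≤ RCLike.re (inner ℂ (S f) f : ℂ) := by
      intro f
      have h1 : (inner ℂ (S f) f : ℂ) = inner ℂ (T f) (T f) := by
        rw [hSdef, ContinuousLinearMap.comp_apply, ContinuousLinearMap.adjoint_inner_left]
      rw [h1, inner_self_eq_norm_sq, hTsq]
      exact (hfr f).2.1
    have hlow : ∀ f : H, A * ‖f‖ ≤ ‖S f‖ := by
      intro f
      rcases eq_or_lt_of_le (norm_nonneg f) with h0 | h0
      · simp [← h0]
      have h1 := hcoer f
      have h2 : RCLike.re (inner ℂ (S f) f : ℂ) ≤ ‖S f‖ * ‖f‖ :=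
        (RCLike.re_le_norm _).trans (norm_inner_le_norm _ _)
      nlinarith
    have hanti : AntilipschitzWith (A⁻¹).toNNReal S := by
      apply ContinuousLinearMap.antilipschitz_of_bound
      intro x
      rw [Real.coe_toNNReal _ (by positivity)]
      rw [inv_mul_eq_div, le_div_iff₀ hA0, mul_comm]
      exact hlow x
    have hclosed : IsClosed (LinearMap.range (S : H →ₗ[ℂ] H) : Set H) :=
      hanti.isClosed_range S.uniformContinuous
    haveI := hclosed.completeSpace_coe
    have htop : LinearMap.range (S : H →ₗ[ℂ] H) = ⊤ := by
      rw [← (LinearMap.range (S : H →ₗ[ℂ] H)).orthogonal_orthogonal, Submodule.eq_top_iff']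
      intro f w hw
      have hw0 : w = 0 := by
        have h0 : (inner ℂ (S w) w : ℂ) = 0 := hw (S w) (LinearMap.mem_range_self _ w)
        have h1 := hcoer w
        rw [h0] at h1
        simp only [map_zero] at h1
        have : ‖w‖ = 0 := by
          by_contra hne
          have hp : 0 < ‖w‖ := lt_of_le_of_ne (norm_nonneg w) (Ne.symm hne)
          nlinarith [mul_pos hA0 (mul_pos hp hp)]
        simpa using this
      simp [hw0]
    intro y
    obtain ⟨x, hx⟩ : y ∈ LinearMap.range (S : H →ₗ[ℂ] H) := htop ▸ Submodule.mem_top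
    exact ⟨T x, hx⟩
  · rintro ⟨T, hTf, hTnorm, hsurj⟩
    have hTsq : ∀ f : H, ‖T f‖ ^ 2 = ∑' i, v i ^ 2 * ‖sq i f‖ ^ 2 := by
      intro f
      rw [lp_norm_sq']
      exact tsum_congr fun i => by rw [hTf f i, hterm]
    obtain ⟨c, hc0, hc⟩ :=
      (ContinuousLinearMap.adjoint T).exists_preimage_norm_le hsurj
    have hlow : ∀ f : H, ‖f‖ ≤ c * ‖T f‖ := by
      intro f
      obtain ⟨x, hx, hxn⟩ := hc f
      have h1 : (‖f‖ : ℝ) ^ 2 = RCLike.re (inner ℂ f f : ℂ) := (inner_self_eq_norm_sq _).symm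
      have h2 : (inner ℂ f f : ℂ) = inner ℂ x (T f) := by
        rw [← hx, ContinuousLinearMap.adjoint_inner_left]
      have h3 : RCLike.re (inner ℂ x (T f) : ℂ) ≤ ‖x‖ * ‖T f‖ :=
        (RCLike.re_le_norm _).trans (norm_inner_le_norm _ _)
      have h4 : ‖f‖ ^ 2 ≤ c * ‖f‖ * ‖T f‖ := by
        rw [h1, h2]
        calc RCLike.re (inner ℂ x (T f) : ℂ) ≤ ‖x‖ * ‖T f‖ := h3
          _ ≤ c * ‖f‖ * ‖T f‖ := by
              have := norm_nonneg (T f)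
              nlinarith
      rcases eq_or_lt_of_le (norm_nonneg f) with h0 | h0
      · rw [← h0]; positivity
      · nlinarith
    refine ⟨min (c ^ 2)⁻¹ B, by positivity, min_le_right _ _, ?_⟩
    intro f
    refine ⟨(lp_summable' (T f)).congr fun i => by rw [hTf f i, hterm], ?_, ?_⟩
    · have h1 : ‖f‖ ^ 2 ≤ c ^ 2 * ‖T f‖ ^ 2 := by
        have := hlow f
        nlinarith [norm_nonneg f, norm_nonneg (T f)]
      have h2 : (c ^ 2)⁻¹ * ‖f‖ ^ 2 ≤ ‖T f‖ ^ 2 := by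
        rw [inv_mul_eq_div, div_le_iff₀ (by positivity)]
        linarith [h1]
      calc min (c ^ 2)⁻¹ B * ‖f‖ ^ 2 ≤ (c ^ 2)⁻¹ * ‖f‖ ^ 2 := by
            apply mul_le_mul_of_nonneg_right (min_le_left _ _) (by positivity)
        _ ≤ ‖T f‖ ^ 2 := h2
        _ = ∑' i, v i ^ 2 * ‖sq i f‖ ^ 2 := hTsq f
    · have h1 : ‖T f‖ ≤ Real.sqrt B * ‖f‖ := by
        calc ‖T f‖ ≤ ‖T‖ * ‖f‖ := T.le_opNorm f
          _ ≤ Real.sqrt B * ‖f‖ := by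
              apply mul_le_mul_of_nonneg_right hTnorm (norm_nonneg f)
      calc (∑' i, v i ^ 2 * ‖sq i f‖ ^ 2) = ‖T f‖ ^ 2 := (hTsq f).symm
        _ ≤ B * ‖f‖ ^ 2 := by
            nlinarith [Real.sq_sqrt hB.le, Real.sqrt_nonneg B, norm_nonneg (T f),
              norm_nonneg f]
end

section
/- Let W = {(W_i, v_i)}_{i∈I} be a (C,C')-controlled fusion frame for H with bounds A and B, and let J ⊆ I. If Σ_{i∈J} v_i² > B, then ⋂_{i∈J} M_i = {0}, where M_i = {f ∈ H : (C*π_{W_i}C')^{1/2} f = f}. -/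
open ContinuousLinearMap

/-- If `{(W i, v i)}` is a `(C,C')`-controlled fusion frame with bounds `A, B`
and `J ⊆ I` satisfies `∑_{i ∈ J} v i ^ 2 > B`, then
`⋂_{i ∈ J} {f : (C* π_{W i} C')^{1/2} f = f} = {0}`. -/
theorem stmt_4 {H : Type*} [NormedAddCommGroup H] [InnerProductSpace ℂ H] [CompleteSpace H]
    {ι : Type*} [Countable ι]
    (C C' : H →L[ℂ] H) (hC : IsUnit C) (hC' : IsUnit C')
    (W : ι → Submodule ℂ H) [∀ i, CompleteSpace (W i)]
    (v : ι → ℝ) (hv : ∀ i, 0 < v i)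
    (sq : ι → H →L[ℂ] H)
    (hGpos : ∀ i, (ctrlOp C C' (W i)).IsPositive)
    (hsq_pos : ∀ i, (sq i).IsPositive)
    (hsq_sq : ∀ i, sq i ∘L sq i = ctrlOp C C' (W i))
    (A B : ℝ) (hA : 0 < A) (hAB : A ≤ B)
    (hframe : ∀ f : H,
      Summable (fun i => v i ^ 2 * ‖sq i f‖ ^ 2) ∧
      A * ‖f‖ ^ 2 ≤ ∑' i, v i ^ 2 * ‖sq i f‖ ^ 2 ∧
      (∑' i, v i ^ 2 * ‖sq i f‖ ^ 2) ≤ B * ‖f‖ ^ 2)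
    (J : Set ι)
    (hJ : ENNReal.ofReal B < ∑' i : J, ENNReal.ofReal (v i ^ 2)) :
    ∀ f : H, (∀ i ∈ J, sq i f = f) → f = 0 := by
  intro f hf
  by_contra hf0
  have hfn : 0 < ‖f‖ ^ 2 := pow_pos (norm_pos_iff.mpr hf0) 2
  obtain ⟨hsum, _, hupper⟩ := hframe f
  have hsubJ : Summable (fun i : J => v (i : ι) ^ 2 * ‖sq (i : ι) f‖ ^ 2) :=
    hsum.subtype J
  have hcong : ∀ i : J, v (i : ι) ^ 2 * ‖sq (i : ι) f‖ ^ 2 = v (i : ι) ^ 2 * ‖f‖ ^ 2 := by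
    intro i; rw [hf i i.2]
  have hsubJ' : Summable (fun i : J => v (i : ι) ^ 2 * ‖f‖ ^ 2) := by
    simpa only [hcong] using hsubJ
  have hsv : Summable (fun i : J => v (i : ι) ^ 2) := by
    have := hsubJ'.mul_right (‖f‖ ^ 2)⁻¹
    simpa [mul_assoc, mul_inv_cancel₀ hfn.ne'] using this
  have hofReal : ∑' i : J, ENNReal.ofReal (v (i : ι) ^ 2)
      = ENNReal.ofReal (∑' i : J, v (i : ι) ^ 2) :=
    (ENNReal.ofReal_tsum_of_nonneg (fun i => sq_nonneg _) hsv).symm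
  set S := ∑' i : J, v (i : ι) ^ 2 with hS
  have hBS : B < S := by
    by_contra h
    push_neg at h
    exact absurd (hofReal ▸ hJ) (not_lt.2 (ENNReal.ofReal_le_ofReal h))
  have hle : S * ‖f‖ ^ 2 ≤ B * ‖f‖ ^ 2 := by
    have h1 : ∑' i : J, v (i : ι) ^ 2 * ‖sq (i : ι) f‖ ^ 2
        ≤ ∑' i, v i ^ 2 * ‖sq i f‖ ^ 2 :=
      Summable.tsum_subtype_le _ J (fun i => by positivity) hsum
    have h2 : S * ‖f‖ ^ 2 = ∑' i : J, v (i : ι) ^ 2 * ‖sq (i : ι) f‖ ^ 2 := by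
      rw [tsum_congr hcong, tsum_mul_right]
    linarith
  have := (mul_le_mul_iff_of_pos_right hfn).mp hle
  linarith
end

section
/- Let W = {(W_i, v_i)}_{i∈I} be a (C,C')-controlled fusion frame for H with bounds A and B, and let J ⊆ I. If α := Σ_{i∈J} v_i² ‖C*π_{W_i}C'‖ < A, then the reduced family {(W_i, v_i)}_{i∈I∖J} is a (C,C')-controlled fusion frame for H with bounds A − α and B. -/
open ContinuousLinearMap
open scoped InnerProductSpace

set_option maxHeartbeats 1000000 in
/-- If `{(W i, v i)}` is a `(C,C')`-controlled fusion frame with bounds `A, B`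
and `J ⊆ I` satisfies `α := ∑_{i ∈ J} v i ^ 2 * ‖C* π_{W i} C'‖ < A`, then
`{(W i, v i)}_{i ∈ I \ J}` is a `(C,C')`-controlled fusion frame with bounds `A - α` and `B`. -/
theorem stmt_6 {H : Type*} [NormedAddCommGroup H] [InnerProductSpace ℂ H] [CompleteSpace H]
    {ι : Type*} [Countable ι]
    (C C' : H →L[ℂ] H) (hC : IsUnit C) (hC' : IsUnit C')
    (W : ι → Submodule ℂ H) [∀ i, CompleteSpace (W i)]
    (v : ι → ℝ) (hv : ∀ i, 0 < v i)
    (sq : ι → H →L[ℂ] H)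
    (hGpos : ∀ i, (ctrlOp C C' (W i)).IsPositive)
    (hsq_pos : ∀ i, (sq i).IsPositive)
    (hsq_sq : ∀ i, sq i ∘L sq i = ctrlOp C C' (W i))
    (A B : ℝ) (hA : 0 < A) (hAB : A ≤ B)
    (hframe : ∀ f : H,
      Summable (fun i => v i ^ 2 * ‖sq i f‖ ^ 2) ∧
      A * ‖f‖ ^ 2 ≤ ∑' i, v i ^ 2 * ‖sq i f‖ ^ 2 ∧
      (∑' i, v i ^ 2 * ‖sq i f‖ ^ 2) ≤ B * ‖f‖ ^ 2)
    (J : Set ι) (α : ℝ)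
    (hαsum : HasSum (fun i : J => v i ^ 2 * ‖ctrlOp C C' (W i)‖) α)
    (hα : α < A) :
    ∀ f : H,
      Summable (fun i : ↥Jᶜ => v i ^ 2 * ‖sq i f‖ ^ 2) ∧
      (A - α) * ‖f‖ ^ 2 ≤ ∑' i : ↥Jᶜ, v i ^ 2 * ‖sq i f‖ ^ 2 ∧
      (∑' i : ↥Jᶜ, v i ^ 2 * ‖sq i f‖ ^ 2) ≤ B * ‖f‖ ^ 2 := by
  intro f
  obtain ⟨hsum, hlow, hup⟩ := hframe f
  have hnn : ∀ i, 0 ≤ v i ^ 2 * ‖sq i f‖ ^ 2 := fun i => by positivity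
  have hsumJc : Summable (fun i : ↥Jᶜ => v i ^ 2 * ‖sq i f‖ ^ 2) := hsum.subtype _
  have hsumJ : Summable (fun i : J => v i ^ 2 * ‖sq i f‖ ^ 2) := hsum.subtype _
  have hsplit : (∑' i : J, v i ^ 2 * ‖sq i f‖ ^ 2) +
      (∑' i : ↥Jᶜ, v i ^ 2 * ‖sq i f‖ ^ 2) = ∑' i, v i ^ 2 * ‖sq i f‖ ^ 2 :=
    Summable.tsum_add_tsum_compl (f := fun i => v i ^ 2 * ‖sq i f‖ ^ 2) hsumJ hsumJc
  have hJnn : 0 ≤ ∑' i : J, v i ^ 2 * ‖sq i f‖ ^ 2 := tsum_nonneg fun i => hnn i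
  refine ⟨hsumJc, ?_, by linarith⟩
  have hkey : ∀ i, ‖sq i f‖ ^ 2 ≤ ‖ctrlOp C C' (W i)‖ * ‖f‖ ^ 2 := by
    intro i
    have h0 : ⟪f, ctrlOp C C' (W i) f⟫_ℂ = ⟪sq i f, sq i f⟫_ℂ := by
      rw [← hsq_sq i]
      calc ⟪f, (sq i ∘L sq i) f⟫_ℂ
          = ⟪f, (ContinuousLinearMap.adjoint (sq i)) (sq i f)⟫_ℂ := by
            rw [(hsq_pos i).isSelfAdjoint.adjoint_eq]; rfl
        _ = ⟪sq i f, sq i f⟫_ℂ := adjoint_inner_right _ _ _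
    have h1 : (‖sq i f‖ : ℝ) ^ 2 = RCLike.re (⟪f, ctrlOp C C' (W i) f⟫_ℂ) := by
      rw [h0, @inner_self_eq_norm_sq ℂ]
    have h2 : RCLike.re (⟪f, ctrlOp C C' (W i) f⟫_ℂ) ≤ ‖(⟪f, ctrlOp C C' (W i) f⟫_ℂ)‖ :=
      RCLike.re_le_norm _
    have h3 : ‖(⟪f, ctrlOp C C' (W i) f⟫_ℂ)‖ ≤ ‖f‖ * ‖ctrlOp C C' (W i) f‖ :=
      norm_inner_le_norm _ _
    have h4 : ‖ctrlOp C C' (W i) f‖ ≤ ‖ctrlOp C C' (W i)‖ * ‖f‖ :=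
      (ctrlOp C C' (W i)).le_opNorm f
    nlinarith [norm_nonneg f]
  have hJle : (∑' i : J, v i ^ 2 * ‖sq i f‖ ^ 2) ≤ α * ‖f‖ ^ 2 := by
    have hαf : HasSum (fun i : J => (v i ^ 2 * ‖ctrlOp C C' (W i)‖) * ‖f‖ ^ 2)
        (α * ‖f‖ ^ 2) := hαsum.mul_right _
    refine le_of_le_of_eq (Summable.tsum_le_tsum ?_ hsumJ hαf.summable) hαf.tsum_eq
    intro i
    have := hkey (i : ι)
    have hv2 : (0:ℝ) ≤ v (i:ι) ^ 2 := sq_nonneg _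
    nlinarith
  linarith
end

section
/- Suppose there exists A₂ > 0 such that for every finitely supported sequence (f_i)_{i∈I} of elements of H one has ‖Σ_{i∈I} v_i (C*π_{Z_i}C')^{1/2} f_i‖² ≤ A₂ Σ_{i∈I} ‖f_i‖². Then Σ_{i∈I} v_i² ‖(C*π_{Z_i}C')^{1/2} f‖² ≤ A₂‖f‖² for every f ∈ H. -/
open ContinuousLinearMap

/-- If `‖∑ i, v i • (C* π_{Z i} C')^{1/2} (f_i)‖ ^ 2 ≤ A₂ * ∑ i, ‖f_i‖ ^ 2`
for every finitely supported sequence `(f_i)`, then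
`∑ i, v i ^ 2 * ‖(C* π_{Z i} C')^{1/2} f‖ ^ 2 ≤ A₂ ‖f‖ ^ 2` for every `f ∈ H`. -/
theorem stmt_14 {H : Type*} [NormedAddCommGroup H] [InnerProductSpace ℂ H] [CompleteSpace H]
    {ι : Type*} [Countable ι]
    (C C' : H →L[ℂ] H) (hC : IsUnit C) (hC' : IsUnit C')
    (Z : ι → Submodule ℂ H) [∀ i, CompleteSpace (Z i)]
    (v : ι → ℝ) (hv : ∀ i, 0 < v i)
    (sq : ι → H →L[ℂ] H)
    (hGpos : ∀ i, (ctrlOp C C' (Z i)).IsPositive)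
    (hsq_pos : ∀ i, (sq i).IsPositive)
    (hsq_sq : ∀ i, sq i ∘L sq i = ctrlOp C C' (Z i))
    (A₂ : ℝ) (hA₂ : 0 < A₂)
    (hII : ∀ (s : Finset ι) (g : ι → H),
      ‖∑ i ∈ s, v i • sq i (g i)‖ ^ 2 ≤ A₂ * ∑ i ∈ s, ‖g i‖ ^ 2) :
    ∀ f : H, Summable (fun i => v i ^ 2 * ‖sq i f‖ ^ 2) ∧
      (∑' i, v i ^ 2 * ‖sq i f‖ ^ 2) ≤ A₂ * ‖f‖ ^ 2 := by
  intro f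
  have key : ∀ s : Finset ι, ∑ i ∈ s, v i ^ 2 * ‖sq i f‖ ^ 2 ≤ A₂ * ‖f‖ ^ 2 := by
    intro s
    set S := ∑ i ∈ s, v i ^ 2 * ‖sq i f‖ ^ 2 with hS
    have hSnn : 0 ≤ S := Finset.sum_nonneg (fun i _ => by positivity)
    set g : ι → H := fun i => v i • sq i f with hg
    set T := ∑ i ∈ s, v i • sq i (g i) with hT
    have hinner : (inner ℂ f T : ℂ) = (S : ℂ) := by
      rw [hT, inner_sum, hS]
      push_cast
      refine Finset.sum_congr rfl fun i _ => ?_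
      have hsa : ContinuousLinearMap.adjoint (sq i) = sq i := (hsq_pos i).isSelfAdjoint.adjoint_eq
      simp only [hg, RCLike.real_smul_eq_coe_smul (K := ℂ)]
      rw [inner_smul_right, map_smul, inner_smul_right,
        ← ContinuousLinearMap.adjoint_inner_left, hsa, inner_self_eq_norm_sq_to_K]
      norm_cast
      ring_nf
      rfl
    have h1 : S ≤ ‖f‖ * ‖T‖ := by
      have := re_inner_le_norm (𝕜 := ℂ) f T
      rw [hinner] at this
      simpa using this
    have h2 : ‖T‖ ^ 2 ≤ A₂ * S := by
      have := hII s g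
      have hgs : ∑ i ∈ s, ‖g i‖ ^ 2 = S := by
        rw [hS]
        refine Finset.sum_congr rfl fun i _ => ?_
        rw [hg]
        simp [norm_smul, mul_pow, abs_of_pos (hv i)]
      rw [hgs] at this
      exact this
    rcases hSnn.eq_or_lt with h | h
    · rw [← h]; positivity
    · have h3 : S * S ≤ (A₂ * ‖f‖ ^ 2) * S := by
        nlinarith [mul_self_le_mul_self hSnn h1, mul_le_mul_of_nonneg_left h2 (sq_nonneg ‖f‖)]
      exact le_of_mul_le_mul_right h3 h
  have hsum : Summable (fun i => v i ^ 2 * ‖sq i f‖ ^ 2) :=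
    summable_of_sum_le (fun i => by positivity) key
  exact ⟨hsum, Summable.tsum_le_of_sum_le hsum key⟩
end

section
/- Suppose A₁, A₂ > 0 satisfy: (I) Σ_{i∈I} v_i² ‖(C*π_{W_i}C')^{1/2} f‖² ≤ A₁‖f‖² for all f ∈ H, and (II) ‖Σ_{i∈I} v_i (C*π_{Z_i}C')^{1/2} f_i‖² ≤ A₂ Σ_{i∈I} ‖f_i‖² for every (f_i)_{i∈I} ∈ ℓ²(I,H). Then the CC'-approximation operator Φf := Σ_{i∈I} v_i² (C*π_{Z_i}C')^{1/2} (C*π_{W_i}C')^{1/2} f is well defined (the series converges for every f ∈ H) and bounded with ‖Φf‖² ≤ A₁A₂‖f‖² for all f. If moreover 0 ≤ γ < 1 and ‖f − Φf‖ ≤ γ‖f‖ for all f ∈ H, then Φ is invertible and ‖Φ⁻¹‖ ≤ (1−γ)⁻¹. -/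
open ContinuousLinearMap

/-- Under hypotheses (I) and (II), the `CC'`-approximation operator
`Φ f = ∑ i, v i ^ 2 • (C* π_{Z i} C')^{1/2} ((C* π_{W i} C')^{1/2} f)` is well defined
(the series converges for every `f`) and bounded with `‖Φ f‖ ^ 2 ≤ A₁ * A₂ * ‖f‖ ^ 2`; if
moreover `0 ≤ γ < 1` and `‖f - Φ f‖ ≤ γ ‖f‖` for all `f`, then `Φ` is invertible with
`‖Φ⁻¹‖ ≤ (1 - γ)⁻¹`. -/
theorem stmt_15 {H : Type*} [NormedAddCommGroup H] [InnerProductSpace ℂ H] [CompleteSpace H]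
    {ι : Type*} [Countable ι]
    (C C' : H →L[ℂ] H) (hC : IsUnit C) (hC' : IsUnit C')
    (W Z : ι → Submodule ℂ H) [∀ i, CompleteSpace (W i)] [∀ i, CompleteSpace (Z i)]
    (v : ι → ℝ) (hv : ∀ i, 0 < v i)
    (sqW sqZ : ι → H →L[ℂ] H)
    (hGWpos : ∀ i, (ctrlOp C C' (W i)).IsPositive)
    (hGZpos : ∀ i, (ctrlOp C C' (Z i)).IsPositive)
    (hsqW_pos : ∀ i, (sqW i).IsPositive)
    (hsqZ_pos : ∀ i, (sqZ i).IsPositive)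
    (hsqW_sq : ∀ i, sqW i ∘L sqW i = ctrlOp C C' (W i))
    (hsqZ_sq : ∀ i, sqZ i ∘L sqZ i = ctrlOp C C' (Z i))
    (A₁ A₂ γ : ℝ) (hA₁ : 0 < A₁) (hA₂ : 0 < A₂) (hγ0 : 0 ≤ γ) (hγ1 : γ < 1)
    (hI : ∀ f : H, Summable (fun i => v i ^ 2 * ‖sqW i f‖ ^ 2) ∧
      (∑' i, v i ^ 2 * ‖sqW i f‖ ^ 2) ≤ A₁ * ‖f‖ ^ 2)
    (hII : ∀ g : lp (fun _ : ι => H) 2,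
      Summable (fun i => v i • sqZ i (g i)) ∧
      ‖∑' i, v i • sqZ i (g i)‖ ^ 2 ≤ A₂ * ∑' i, ‖g i‖ ^ 2) :
    (∀ f : H, Summable (fun i => (v i ^ 2) • sqZ i (sqW i f))) ∧
    (∀ f : H, ‖∑' i, (v i ^ 2) • sqZ i (sqW i f)‖ ^ 2 ≤ A₁ * A₂ * ‖f‖ ^ 2) ∧
    ((∀ f : H, ‖f - ∑' i, (v i ^ 2) • sqZ i (sqW i f)‖ ≤ γ * ‖f‖) →
      ∃ Φ : H ≃L[ℂ] H, (∀ f : H, Φ f = ∑' i, (v i ^ 2) • sqZ i (sqW i f)) ∧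
        ‖(Φ.symm : H →L[ℂ] H)‖ ≤ (1 - γ)⁻¹) := by
  have key : ∀ f : H, Summable (fun i => (v i ^ 2) • sqZ i (sqW i f)) ∧
      ‖∑' i, (v i ^ 2) • sqZ i (sqW i f)‖ ^ 2 ≤ A₁ * A₂ * ‖f‖ ^ 2 := by
    intro f
    have hnorm : ∀ i, ‖v i • sqW i f‖ ^ 2 = v i ^ 2 * ‖sqW i f‖ ^ 2 := by
      intro i
      rw [norm_smul, Real.norm_eq_abs, abs_of_pos (hv i), mul_pow]
    have hsummable : Summable (fun i => ‖v i • sqW i f‖ ^ 2) := by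
      simpa only [hnorm] using (hI f).1
    have hmem : Memℓp (fun i => v i • sqW i f) 2 := by
      apply memℓp_gen
      have h2 : (2 : ENNReal).toReal = ((2 : ℕ) : ℝ) := by norm_num
      simpa [h2, Real.rpow_natCast] using hsummable
    set g : lp (fun _ : ι => H) 2 := ⟨fun i => v i • sqW i f, hmem⟩ with hg
    have hgi : ∀ i, g i = v i • sqW i f := fun i => rfl
    have hfun : (fun i => v i • sqZ i (g i)) = fun i => (v i ^ 2) • sqZ i (sqW i f) := by
      funext i
      rw [hgi, (sqZ i).map_smul_of_tower, smul_smul, ← sq]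
    obtain ⟨hs, hb⟩ := hII g
    rw [hfun] at hs hb
    refine ⟨hs, hb.trans ?_⟩
    have : ∑' i, ‖g i‖ ^ 2 ≤ A₁ * ‖f‖ ^ 2 := by
      calc ∑' i, ‖g i‖ ^ 2 = ∑' i, v i ^ 2 * ‖sqW i f‖ ^ 2 := by
            exact tsum_congr fun i => by rw [hgi, hnorm]
        _ ≤ A₁ * ‖f‖ ^ 2 := (hI f).2
    calc A₂ * ∑' i, ‖g i‖ ^ 2 ≤ A₂ * (A₁ * ‖f‖ ^ 2) :=
          mul_le_mul_of_nonneg_left this hA₂.le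
      _ = A₁ * A₂ * ‖f‖ ^ 2 := by ring
  refine ⟨fun f => (key f).1, fun f => (key f).2, ?_⟩
  intro h
  have hbound : ∀ f : H, ‖∑' i, (v i ^ 2) • sqZ i (sqW i f)‖ ≤ Real.sqrt (A₁ * A₂) * ‖f‖ := by
    intro f
    have := Real.sqrt_le_sqrt (key f).2
    rwa [Real.sqrt_sq (norm_nonneg _), Real.sqrt_mul (by positivity), Real.sqrt_sq (norm_nonneg f)]
      at this
  set L : H →ₗ[ℂ] H :=
    { toFun := fun f => ∑' i, (v i ^ 2) • sqZ i (sqW i f)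
      map_add' := fun f g => by
        show (∑' i, (v i ^ 2) • sqZ i (sqW i (f + g)))
            = (∑' i, (v i ^ 2) • sqZ i (sqW i f)) + ∑' i, (v i ^ 2) • sqZ i (sqW i g)
        rw [← Summable.tsum_add (key f).1 (key g).1]
        exact tsum_congr fun i => by rw [map_add, map_add, smul_add]
      map_smul' := fun c f => by
        show (∑' i, (v i ^ 2) • sqZ i (sqW i (c • f))) = c • ∑' i, (v i ^ 2) • sqZ i (sqW i f)
        rw [← Summable.tsum_const_smul c (key f).1]
        exact tsum_congr fun i => by rw [map_smul, map_smul, smul_comm] } with hL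
  set T : H →L[ℂ] H := L.mkContinuous (Real.sqrt (A₁ * A₂)) hbound with hT
  have hTf : ∀ f : H, T f = ∑' i, (v i ^ 2) • sqZ i (sqW i f) := fun f => rfl
  have hlt : ‖(1 : H →L[ℂ] H) - T‖ < 1 := by
    have : ‖(1 : H →L[ℂ] H) - T‖ ≤ γ := by
      apply ContinuousLinearMap.opNorm_le_bound _ hγ0
      intro f
      simpa [hTf] using h f
    linarith
  set u : (H →L[ℂ] H)ˣ := Units.oneSub ((1 : H →L[ℂ] H) - T) hlt with hu
  have huval : (u : H →L[ℂ] H) = T := by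
    rw [hu, Units.val_oneSub, sub_sub_cancel]
  set Φ : H ≃L[ℂ] H := ContinuousLinearEquiv.unitsEquiv ℂ H u with hΦ
  refine ⟨Φ, fun f => by rw [hΦ, ContinuousLinearEquiv.unitsEquiv_apply, huval, hTf], ?_⟩
  have hsymm : (Φ.symm : H →L[ℂ] H) = ((u⁻¹ : (H →L[ℂ] H)ˣ) : H →L[ℂ] H) := by
    ext x
    apply Φ.injective
    simp only [ContinuousLinearEquiv.coe_coe]
    rw [Φ.apply_symm_apply]
    symm
    show (Φ : H →L[ℂ] H) _ = x
    have hΦcoe : (Φ : H →L[ℂ] H) = (u : H →L[ℂ] H) := rfl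
    rw [hΦcoe, ← ContinuousLinearMap.mul_apply, u.mul_inv, ContinuousLinearMap.one_apply]
  rw [hsymm]
  have hinv : ((u⁻¹ : (H →L[ℂ] H)ˣ) : H →L[ℂ] H) =
      ∑' n : ℕ, ((1 : H →L[ℂ] H) - T) ^ n := rfl
  rw [hinv]
  have hgeo := tsum_geometric_le_of_norm_lt_one ((1 : H →L[ℂ] H) - T) hlt
  have hone : ‖(1 : H →L[ℂ] H)‖ ≤ 1 := norm_id_le
  have hTγ : ‖(1 : H →L[ℂ] H) - T‖ ≤ γ := by
    apply ContinuousLinearMap.opNorm_le_bound _ hγ0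
    intro f
    simpa [hTf] using h f
  have hinv_le : (1 - ‖(1 : H →L[ℂ] H) - T‖)⁻¹ ≤ (1 - γ)⁻¹ := by
    apply inv_anti₀ (by linarith) (by linarith)
  linarith
end

section
/- Let W = {(W_i, v_i)}_{i∈I} be a (C,C')-controlled fusion frame for H with bounds A and B. Then for every f ∈ H the series S_W f := Σ_{i∈I} v_i² C*π_{W_i}C' f converges in H, and S_W is a bounded, self-adjoint, positive, invertible linear operator on H satisfying A‖f‖² ≤ ⟨S_W f, f⟩ ≤ B‖f‖² for all f ∈ H (i.e., A·Id ≤ S_W ≤ B·Id). -/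
open ContinuousLinearMap

/-- If `{(W i, v i)}` is a `(C,C')`-controlled fusion frame with bounds
`A, B`, then the controlled fusion frame operator `S f = ∑ i, v i ^ 2 • (C* π_{W i} C') f` is a
well-defined bounded, self-adjoint, positive, invertible operator with
`A ‖f‖ ^ 2 ≤ ⟨S f, f⟩ ≤ B ‖f‖ ^ 2` for all `f`. -/
theorem stmt_16 {H : Type*} [NormedAddCommGroup H] [InnerProductSpace ℂ H] [CompleteSpace H]
    {ι : Type*} [Countable ι]
    (C C' : H →L[ℂ] H) (hC : IsUnit C) (hC' : IsUnit C')
    (W : ι → Submodule ℂ H) [∀ i, CompleteSpace (W i)]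
    (v : ι → ℝ) (hv : ∀ i, 0 < v i)
    (sq : ι → H →L[ℂ] H)
    (hGpos : ∀ i, (ctrlOp C C' (W i)).IsPositive)
    (hsq_pos : ∀ i, (sq i).IsPositive)
    (hsq_sq : ∀ i, sq i ∘L sq i = ctrlOp C C' (W i))
    (A B : ℝ) (hA : 0 < A) (hAB : A ≤ B)
    (hframe : ∀ f : H,
      Summable (fun i => v i ^ 2 * ‖sq i f‖ ^ 2) ∧
      A * ‖f‖ ^ 2 ≤ ∑' i, v i ^ 2 * ‖sq i f‖ ^ 2 ∧
      (∑' i, v i ^ 2 * ‖sq i f‖ ^ 2) ≤ B * ‖f‖ ^ 2) :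
    ∃ S : H ≃L[ℂ] H,
      (∀ f : H, HasSum (fun i => (v i ^ 2) • ctrlOp C C' (W i) f) (S f)) ∧
      IsSelfAdjoint (S : H →L[ℂ] H) ∧
      (S : H →L[ℂ] H).IsPositive ∧
      (∀ f : H, A * ‖f‖ ^ 2 ≤ (inner ℂ ((S : H →L[ℂ] H) f) f : ℂ).re ∧
        (inner ℂ ((S : H →L[ℂ] H) f) f : ℂ).re ≤ B * ‖f‖ ^ 2) := by
  classical
  have hBpos : 0 < B := hA.trans_le hAB
  set G : ι → H →L[ℂ] H := fun i => ctrlOp C C' (W i) with hGdef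
  have hsm : ∀ (r : ℝ) (x : H), r • x = (r : ℂ) • x := fun r x => by
    rw [← smul_one_smul ℂ r x]; norm_num
  have hsym : ∀ (i : ι) (x y : H), (inner ℂ (G i x) y : ℂ) = inner ℂ (sq i x) (sq i y) := by
    intro i x y
    have h1 : G i x = sq i (sq i x) := by
      show ctrlOp C C' (W i) x = _
      rw [← hsq_sq i]; rfl
    rw [h1]
    exact (isSelfAdjoint_iff_isSymmetric.mp (hsq_pos i).isSelfAdjoint) (sq i x) y
  have hGsym : ∀ (i : ι) (x y : H), (inner ℂ (G i x) y : ℂ) = inner ℂ x (G i y) :=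
    fun i x y => (isSelfAdjoint_iff_isSymmetric.mp (hGpos i).isSelfAdjoint) x y
  have hterm_left : ∀ (i : ι) (x y : H), (inner ℂ ((v i ^ 2) • G i x) y : ℂ)
      = ((v i ^ 2 : ℝ) : ℂ) * inner ℂ (sq i x) (sq i y) := by
    intro i x y
    rw [hsm, inner_smul_left, hsym, Complex.conj_ofReal]
  -- finite-set norm bound
  have key : ∀ (f : H) (t : Finset ι),
      ‖∑ i ∈ t, (v i ^ 2) • G i f‖ ^ 2 ≤ B * ∑ i ∈ t, v i ^ 2 * ‖sq i f‖ ^ 2 := by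
    intro f t
    set g := ∑ i ∈ t, (v i ^ 2) • G i f with hg
    have hXnn : 0 ≤ ∑ i ∈ t, v i ^ 2 * ‖sq i f‖ ^ 2 :=
      Finset.sum_nonneg fun i _ => by positivity
    have h1 : ‖g‖ ^ 2 = (inner ℂ g g : ℂ).re := by
      rw [← RCLike.re_to_complex]
      exact (inner_self_eq_norm_sq g).symm
    have h2 : (inner ℂ g g : ℂ).re = ∑ i ∈ t, v i ^ 2 * (inner ℂ (sq i f) (sq i g) : ℂ).re := by
      conv_lhs => rw [hg, sum_inner]
      rw [Complex.re_sum]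
      refine Finset.sum_congr rfl fun i _ => ?_
      rw [hterm_left i f g]
      simp [Complex.mul_re, ← Complex.ofReal_pow]
    have h3 : ∀ i ∈ t, v i ^ 2 * (inner ℂ (sq i f) (sq i g) : ℂ).re
        ≤ (v i * ‖sq i f‖) * (v i * ‖sq i g‖) := by
      intro i _
      have h0 : (inner ℂ (sq i f) (sq i g) : ℂ).re ≤ ‖sq i f‖ * ‖sq i g‖ := by
        refine le_trans (Complex.re_le_norm _) ?_
        exact norm_inner_le_norm (𝕜 := ℂ) (sq i f) (sq i g)
      calc v i ^ 2 * (inner ℂ (sq i f) (sq i g) : ℂ).re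
          ≤ v i ^ 2 * (‖sq i f‖ * ‖sq i g‖) :=
            mul_le_mul_of_nonneg_left h0 (by positivity)
        _ = (v i * ‖sq i f‖) * (v i * ‖sq i g‖) := by ring
    have hCS : (∑ i ∈ t, (v i * ‖sq i f‖) * (v i * ‖sq i g‖)) ^ 2
        ≤ (∑ i ∈ t, (v i * ‖sq i f‖) ^ 2) * (∑ i ∈ t, (v i * ‖sq i g‖) ^ 2) :=
      Finset.sum_mul_sq_le_sq_mul_sq t _ _
    have hrw : ∀ (h : H), ∀ i ∈ t, (v i * ‖sq i h‖) ^ 2 = v i ^ 2 * ‖sq i h‖ ^ 2 :=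
      fun h i _ => by ring
    have hsumg : (∑ i ∈ t, (v i * ‖sq i g‖) ^ 2) ≤ B * ‖g‖ ^ 2 := by
      rw [Finset.sum_congr rfl (hrw g)]
      exact le_trans (Summable.sum_le_tsum t (fun i _ => by positivity) (hframe g).1) (hframe g).2.2
    have h4 : ‖g‖ ^ 2 ≤ ∑ i ∈ t, (v i * ‖sq i f‖) * (v i * ‖sq i g‖) := by
      rw [h1, h2]; exact Finset.sum_le_sum h3
    have h5 : (∑ i ∈ t, (v i * ‖sq i f‖) ^ 2) = ∑ i ∈ t, v i ^ 2 * ‖sq i f‖ ^ 2 :=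
      Finset.sum_congr rfl (hrw f)
    have hF0 : 0 ≤ ∑ i ∈ t, (v i * ‖sq i f‖) ^ 2 := Finset.sum_nonneg fun i _ => sq_nonneg _
    have hsq2 : (‖g‖ ^ 2) ^ 2 ≤ (∑ i ∈ t, (v i * ‖sq i f‖) * (v i * ‖sq i g‖)) ^ 2 :=
      pow_le_pow_left₀ (sq_nonneg _) h4 2
    have hchain : (‖g‖ ^ 2) ^ 2 ≤ (∑ i ∈ t, v i ^ 2 * ‖sq i f‖ ^ 2) * (B * ‖g‖ ^ 2) := by
      rw [← h5]
      exact hsq2.trans (hCS.trans (mul_le_mul_of_nonneg_left hsumg hF0))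
    rcases eq_or_lt_of_le (sq_nonneg ‖g‖) with h0 | h0
    · rw [← h0]; positivity
    · nlinarith [hchain, h0, hXnn]
  -- summability of the vector series
  have hsummable : ∀ f : H, Summable fun i => (v i ^ 2) • G i f := by
    intro f
    rw [summable_iff_vanishing_norm]
    intro ε hε
    obtain ⟨s, hs⟩ := summable_iff_vanishing_norm.mp (hframe f).1 (ε ^ 2 / B)
      (by positivity)
    refine ⟨s, fun t ht => ?_⟩
    have h2 := hs t ht
    have hXnn : 0 ≤ ∑ i ∈ t, v i ^ 2 * ‖sq i f‖ ^ 2 :=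
      Finset.sum_nonneg fun i _ => by positivity
    have h3 : ∑ i ∈ t, v i ^ 2 * ‖sq i f‖ ^ 2 < ε ^ 2 / B := by
      rwa [Real.norm_eq_abs, abs_of_nonneg hXnn] at h2
    have h4 : ‖∑ i ∈ t, (v i ^ 2) • G i f‖ ^ 2 < ε ^ 2 := by
      calc ‖∑ i ∈ t, (v i ^ 2) • G i f‖ ^ 2 ≤ B * ∑ i ∈ t, v i ^ 2 * ‖sq i f‖ ^ 2 :=
            key f t
        _ < B * (ε ^ 2 / B) := mul_lt_mul_of_pos_left h3 hBpos
        _ = ε ^ 2 := by field_simp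
    exact lt_of_pow_lt_pow_left₀ 2 hε.le h4
  -- the linear operator
  let S₀ : H →ₗ[ℂ] H :=
    { toFun := fun f => ∑' i, (v i ^ 2) • G i f
      map_add' := by
        intro x y
        rw [← Summable.tsum_add (hsummable x) (hsummable y)]
        exact tsum_congr fun i => by rw [map_add, smul_add]
      map_smul' := by
        intro c x
        simp only [RingHom.id_apply]
        rw [← ((hsummable x).hasSum.const_smul c).tsum_eq]
        exact tsum_congr fun i => by rw [map_smul, smul_comm] }
  -- norm bound and continuous operator
  have hnorm : ∀ f : H, ‖S₀ f‖ ≤ B * ‖f‖ := by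
    intro f
    have hts : Filter.Tendsto (fun t : Finset ι => ‖∑ i ∈ t, (v i ^ 2) • G i f‖ ^ 2)
        Filter.atTop (nhds (‖S₀ f‖ ^ 2)) :=
      ((continuous_norm.pow 2).continuousAt).tendsto.comp (hsummable f).hasSum
    have hbd : ‖S₀ f‖ ^ 2 ≤ B * (B * ‖f‖ ^ 2) := by
      refine le_of_tendsto hts (Filter.Eventually.of_forall fun t => ?_)
      calc ‖∑ i ∈ t, (v i ^ 2) • G i f‖ ^ 2 ≤ B * ∑ i ∈ t, v i ^ 2 * ‖sq i f‖ ^ 2 :=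
            key f t
        _ ≤ B * (B * ‖f‖ ^ 2) := by
            apply mul_le_mul_of_nonneg_left _ hBpos.le
            exact le_trans (Summable.sum_le_tsum t (fun i _ => by positivity) (hframe f).1)
              (hframe f).2.2
    have : ‖S₀ f‖ ^ 2 ≤ (B * ‖f‖) ^ 2 := by nlinarith
    exact le_of_pow_le_pow_left₀ two_ne_zero (by positivity) this
  let S₁ : H →L[ℂ] H := S₀.mkContinuous B hnorm
  have hS₁ : ∀ f : H, HasSum (fun i => (v i ^ 2) • G i f) (S₁ f) := fun f =>
    (hsummable f).hasSum
  -- inner products against the sum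
  have hinner_left : ∀ (f y : H),
      HasSum (fun i => (inner ℂ ((v i ^ 2) • G i f) y : ℂ)) (inner ℂ (S₁ f) y : ℂ) := by
    intro f y
    exact (innerSLFlip ℂ y).hasSum (hS₁ f)
  -- value of ⟪S f, f⟫
  have hSf : ∀ f : H, (inner ℂ (S₁ f) f : ℂ) = ((∑' i, v i ^ 2 * ‖sq i f‖ ^ 2 : ℝ) : ℂ) := by
    intro f
    have h1 : ∀ i : ι, (inner ℂ ((v i ^ 2) • G i f) f : ℂ)
        = ((v i ^ 2 * ‖sq i f‖ ^ 2 : ℝ) : ℂ) := by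
      intro i
      rw [hterm_left i f f, inner_self_eq_norm_sq_to_K,
        show (RCLike.ofReal ‖sq i f‖ : ℂ) = Complex.ofReal ‖sq i f‖ from rfl]
      push_cast
      ring
    have h2 : HasSum (fun i => ((v i ^ 2 * ‖sq i f‖ ^ 2 : ℝ) : ℂ)) (inner ℂ (S₁ f) f : ℂ) := by
      have := hinner_left f f
      simpa only [h1] using this
    have h3 : HasSum (fun i => ((v i ^ 2 * ‖sq i f‖ ^ 2 : ℝ) : ℂ))
        ((∑' i, v i ^ 2 * ‖sq i f‖ ^ 2 : ℝ) : ℂ) := by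
      exact Complex.hasSum_ofReal.mpr (hframe f).1.hasSum
    exact h2.unique h3
  -- self-adjointness
  have hselfadj : IsSelfAdjoint S₁ := by
    rw [isSelfAdjoint_iff_isSymmetric]
    intro x y
    have hx := hinner_left x y
    have hy : HasSum (fun i => (inner ℂ x ((v i ^ 2) • G i y) : ℂ)) (inner ℂ x (S₁ y) : ℂ) :=
      (innerSL ℂ x).hasSum (hS₁ y)
    have heq : ∀ i : ι, (inner ℂ ((v i ^ 2) • G i x) y : ℂ) = inner ℂ x ((v i ^ 2) • G i y) := by
      intro i
      rw [hsm, hsm, inner_smul_left, inner_smul_right, Complex.conj_ofReal, hGsym]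
    exact hx.unique (by simp only [heq]; exact hy)
  -- the frame inequalities for S₁
  have hbounds : ∀ f : H, A * ‖f‖ ^ 2 ≤ (inner ℂ (S₁ f) f : ℂ).re ∧
      (inner ℂ (S₁ f) f : ℂ).re ≤ B * ‖f‖ ^ 2 := by
    intro f
    rw [hSf f, Complex.ofReal_re]
    exact ⟨(hframe f).2.1, (hframe f).2.2⟩
  -- positivity
  have hpos : S₁.IsPositive := by
    refine ⟨isSelfAdjoint_iff_isSymmetric.mp hselfadj, fun f => ?_⟩
    have h := (hbounds f).1
    have h0 : (0 : ℝ) ≤ A * ‖f‖ ^ 2 := by positivity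
    show (0 : ℝ) ≤ S₁.reApplyInnerSelf f
    rw [ContinuousLinearMap.reApplyInnerSelf, RCLike.re_to_complex]
    exact le_trans h0 h
  -- lower norm bound and invertibility
  have hlow : ∀ f : H, A * ‖f‖ ≤ ‖S₁ f‖ := by
    intro f
    rcases eq_or_ne f 0 with rfl | hf
    · simp
    have hfpos : 0 < ‖f‖ := norm_pos_iff.mpr hf
    have h1 : A * ‖f‖ ^ 2 ≤ ‖S₁ f‖ * ‖f‖ := by
      refine le_trans (hbounds f).1 (le_trans (Complex.re_le_norm _) ?_)
      exact norm_inner_le_norm (𝕜 := ℂ) (S₁ f) f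
    nlinarith
  have hanti : AntilipschitzWith (⟨A, hA.le⟩ : NNReal)⁻¹ S₁ := by
    apply S₁.antilipschitz_of_bound
    intro x
    have hcoe : (((⟨A, hA.le⟩ : NNReal)⁻¹ : NNReal) : ℝ) = A⁻¹ := by
      exact NNReal.coe_inv _
    rw [hcoe]
    calc ‖x‖ = A⁻¹ * (A * ‖x‖) := by field_simp
      _ ≤ A⁻¹ * ‖S₁ x‖ := mul_le_mul_of_nonneg_left (hlow x) (by positivity)
  have hker : LinearMap.ker (S₁ : H →ₗ[ℂ] H) = ⊥ := LinearMap.ker_eq_bot_of_injective (f := (S₁ : H →ₗ[ℂ] H)) hanti.injective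
  have hclosed : IsClosed (Set.range S₁) := hanti.isClosed_range S₁.uniformContinuous
  have hcr : IsClosed ((LinearMap.range (S₁ : H →ₗ[ℂ] H) : Submodule ℂ H) : Set H) := by
    rwa [LinearMap.coe_range]
  haveI : CompleteSpace (LinearMap.range (S₁ : H →ₗ[ℂ] H) : Submodule ℂ H) := hcr.completeSpace_coe
  have horth : (LinearMap.range (S₁ : H →ₗ[ℂ] H))ᗮ = ⊥ := by
    rw [Submodule.eq_bot_iff]
    intro x hx
    have h0 : (inner ℂ (S₁ x) x : ℂ) = 0 :=
      (Submodule.mem_orthogonal _ x).mp hx (S₁ x) (LinearMap.mem_range_self _ x)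
    have h1 := (hbounds x).1
    rw [h0] at h1
    simp only [Complex.zero_re] at h1
    have hx2 : ‖x‖ ^ 2 ≤ 0 := by nlinarith [h1, hA]
    have hx3 : ‖x‖ ^ 2 = 0 := le_antisymm hx2 (sq_nonneg _)
    have hx0 : ‖x‖ = 0 := by
      nlinarith [norm_nonneg x, hx3]
    exact norm_eq_zero.mp hx0
  have hrange : LinearMap.range (S₁ : H →ₗ[ℂ] H) = ⊤ := Submodule.orthogonal_eq_bot_iff.mp horth
  have hcoe : ((ContinuousLinearEquiv.ofBijective S₁ hker hrange : H ≃L[ℂ] H) : H →L[ℂ] H)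
      = S₁ := ContinuousLinearEquiv.coe_ofBijective S₁ hker hrange
  refine ⟨ContinuousLinearEquiv.ofBijective S₁ hker hrange, ?_, ?_, ?_, ?_⟩
  · intro f
    have : (ContinuousLinearEquiv.ofBijective S₁ hker hrange) f = S₁ f :=
      congrFun (ContinuousLinearEquiv.coeFn_ofBijective S₁ hker hrange) f
    rw [this]; exact hS₁ f
  · rw [hcoe]; exact hselfadj
  · rw [hcoe]; exact hpos
  · rw [hcoe]; exact hbounds
end
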